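/- Let D be a finite strongly connected directed graph. Then every cycle in the underlying undirected graph of D is homologous (in H₁(D; ℤ)) to an integer linear combination of directed cycles of D. Consequently, the classes of directed cycles generate H₁(D; ℤ). -/

import Mathlib

open scoped BigOperators

set_option linter.unusedSectionVars false

section DirCycAux

variable {V E : Type} [Fintype V] [Fintype E] [DecidableEq V] [DecidableEq E]
variable (s t : E → V)

/-- `l` is a nonempty directed walk from `u` to `v`. -/
def DirWalk (u v : V) (l : List E) : Prop :=
  ∃ h : l ≠ [], List.Chain' (fun e f => t e = s f) l ∧
    s (l.head h) = u ∧ t (l.getLast h) = v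

lemma dirWalk_exists
    (hsc : ∀ u v : V, ∃ (n : ℕ) (p : Fin (n + 1) → E),
      s (p 0) = u ∧ t (p (Fin.last n)) = v ∧
      ∀ i : Fin n, t (p i.castSucc) = s (p i.succ)) (u v : V) :
    ∃ l : List E, DirWalk s t u v l := by
  obtain ⟨n, p, h1, h2, h3⟩ := hsc u v
  have hne : List.ofFn p ≠ [] := by
    simp [List.ofFn_eq_nil_iff]
  refine ⟨List.ofFn p, hne, ?_, ?_, ?_⟩
  · show List.IsChain _ _
    rw [List.isChain_iff_getElem]
    intro i hi
    simp only [List.length_ofFn] at hi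
    simp only [List.getElem_ofFn]
    exact h3 ⟨i, by omega⟩
  · rw [List.head_ofFn]
    have e1 : (⟨0, by simp⟩ : Fin (List.ofFn p).length) = Fin.cast (List.length_ofFn (f := p)).symm 0 := by
      ext; simp
    simp only [Fin.mk_zero]
    exact h1
  · rw [List.getLast_eq_getElem, List.getElem_ofFn]
    rw [show (⟨(List.ofFn p).length - 1, by simp⟩ : Fin (n+1)) = Fin.last n from by
      ext; simp [Fin.last]]
    exact h2

lemma dirWalk_append {u v w : V} {l m : List E}
    (hl : DirWalk s t u v l) (hm : DirWalk s t v w m) :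
    DirWalk s t u w (l ++ m) := by
  obtain ⟨hl0, hl1, hl2, hl3⟩ := hl
  obtain ⟨hm0, hm1, hm2, hm3⟩ := hm
  have hne : l ++ m ≠ [] := by simp [hl0]
  refine ⟨hne, ?_, ?_, ?_⟩
  · refine hl1.append hm1 ?_
    intro x hx y hy
    rw [List.getLast?_eq_getLast hl0, Option.mem_def, Option.some_inj] at hx
    rw [List.head?_eq_head hm0, Option.mem_def, Option.some_inj] at hy
    subst hx; subst hy; rw [hl3, hm2]
  · rwa [List.head_append_of_ne_nil hl0]
  · rwa [List.getLast_append_of_ne_nil _ hm0]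

lemma count_eq_sum (l : List E) (f : E) :
    ∑ i : Fin l.length, (if l.get i = f then (1 : ℤ) else 0) = l.count f := by
  induction l with
  | nil => simp
  | cons a l ih =>
      show (∑ i : Fin (l.length + 1), if (a :: l).get i = f then (1:ℤ) else 0) = _
      rw [Fin.sum_univ_succ]
      simp only [List.count_cons, List.get_eq_getElem, Fin.val_succ,
        List.getElem_cons_succ, List.getElem_cons_zero, Fin.val_zero]
      rw [show (∑ i : Fin l.length, if l[(i:ℕ)] = f then (1:ℤ) else 0) = (l.count f : ℤ) from by
        simpa only [List.get_eq_getElem] using ih]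
      push_cast
      simp only [List.get_cons_zero, beq_iff_eq]
      by_cases h : a = f <;> simp [h] <;> ring

/-- A closed directed walk gives an element of the directed-cycle set. -/
lemma closed_mem (a : E) (l : List E)
    (hc : List.Chain' (fun e f => t e = s f) (a :: l))
    (hw : t ((a :: l).getLast (by simp)) = s a) :
    (fun e => (((a :: l).count e : ℤ))) ∈
      {c : E → ℤ | ∃ (n : ℕ) (γ : Fin (n + 1) → E),
        (∀ i, t (γ i) = s (γ (i + 1))) ∧
        c = fun e => ∑ i, if γ i = e then 1 else 0} := by
  set γ : Fin (l.length + 1) → E := fun i => (a :: l).get ⟨i.1, i.2⟩ with hγ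
  refine ⟨l.length, γ, ?_, ?_⟩
  · intro i
    by_cases hi : (i : ℕ) < l.length
    · have hv : ((i + 1 : Fin (l.length + 1)) : ℕ) = (i : ℕ) + 1 :=
        Fin.val_add_one_of_lt (by
          rw [Fin.lt_iff_val_lt_val]; simpa using hi)
      have key := List.isChain_iff_getElem.mp hc (i : ℕ) (by simpa using hi)
      have e1 : γ i = (a :: l).get ⟨(i : ℕ), i.2⟩ := rfl
      have e2 : γ (i + 1) = (a :: l).get ⟨(i : ℕ) + 1, Nat.succ_lt_succ hi⟩ := by
        simp only [hγ]; congr 1; exact Fin.mk_eq_mk.mpr hv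
      rw [e1, e2]
      exact key
    · have hi' : i = Fin.last l.length := by
        ext; have := i.isLt; simp [Fin.last]; omega
      subst hi'
      rw [Fin.last_add_one]
      have h1 : γ (Fin.last l.length) = (a :: l).getLast (by simp) := by
        rw [List.getLast_eq_getElem]
        simp [hγ, Fin.last]
      have h2 : γ 0 = a := rfl
      rw [h1, h2, hw]
  · funext f
    exact (count_eq_sum (a :: l) f).symm

lemma closed_walk_mem {v0 : V} {l : List E} (h : DirWalk s t v0 v0 l) :
    (fun e => ((l.count e : ℤ))) ∈
      {c : E → ℤ | ∃ (n : ℕ) (γ : Fin (n + 1) → E),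
        (∀ i, t (γ i) = s (γ (i + 1))) ∧
        c = fun e => ∑ i, if γ i = e then 1 else 0} := by
  obtain ⟨h0, h1, h2, h3⟩ := h
  obtain ⟨a, l', rfl⟩ := List.exists_cons_of_ne_nil h0
  exact closed_mem s t a l' h1 (by rw [h3]; rw [List.head_cons] at h2; rw [h2])

end DirCycAux

/-- Let `D` be a finite strongly connected directed graph.
Every 1-cycle of the underlying graph (element of `ker ∂ = H₁(D;ℤ)`) is an
integer linear combination of (the chains of) directed cycles; i.e. the classes
of directed cycles generate `H₁(D; ℤ)`. -/
theorem veering_directed_cycles_generate_H1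
    (V E : Type) [Fintype V] [Fintype E] [DecidableEq V] [DecidableEq E]
    (s t : E → V)
    (hsc : ∀ u v : V, ∃ (n : ℕ) (p : Fin (n + 1) → E),
      s (p 0) = u ∧ t (p (Fin.last n)) = v ∧
      ∀ i : Fin n, t (p i.castSucc) = s (p i.succ))
    (z : E → ℤ)
    (hz : ∀ v : V, ∑ e, z e *
      ((if t e = v then 1 else 0) - (if s e = v then 1 else 0)) = 0) :
    z ∈ AddSubgroup.closure {c : E → ℤ | ∃ (n : ℕ) (γ : Fin (n + 1) → E),
      (∀ i, t (γ i) = s (γ (i + 1))) ∧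
      c = fun e => ∑ i, if γ i = e then 1 else 0} := by
  by_cases hV : Nonempty V
  case neg =>
    have : z = 0 := funext fun e => absurd ⟨s e⟩ hV
    rw [this]; exact zero_mem _
  obtain ⟨v0⟩ := hV
  choose W hW using dirWalk_exists s t hsc
  set P : V → List E := fun v => W v0 v with hP
  set Q : V → List E := fun v => W v v0 with hQ
  set Cyc : Set (E → ℤ) := {c : E → ℤ | ∃ (n : ℕ) (γ : Fin (n + 1) → E),
      (∀ i, t (γ i) = s (γ (i + 1))) ∧
      c = fun e => ∑ i, if γ i = e then 1 else 0} with hCyc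
  -- the two families of closed walks
  have mem1 : ∀ e : E,
      (fun f => (((P (s e) ++ [e] ++ Q (t e)).count f : ℤ))) ∈ Cyc := by
    intro e
    apply closed_walk_mem s t (v0 := v0)
    refine dirWalk_append s t (dirWalk_append s t (hW v0 (s e)) ?_) (hW (t e) v0)
    exact ⟨by simp, List.isChain_singleton e, rfl, rfl⟩
  have mem2 : ∀ v : V,
      (fun f => (((P v ++ Q v).count f : ℤ))) ∈ Cyc := by
    intro v
    exact closed_walk_mem s t (dirWalk_append s t (hW v0 v) (hW v v0))
  have hzeq : z = (∑ e : E, z e • fun f => (((P (s e) ++ [e] ++ Q (t e)).count f : ℤ)))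
      - (∑ e : E, z e • fun f => (((P (s e) ++ Q (s e)).count f : ℤ))) := by
    funext f
    simp only [Pi.sub_apply, Finset.sum_apply, Pi.smul_apply, smul_eq_mul]
    rw [← Finset.sum_sub_distrib]
    have step : ∀ e : E,
        z e * ((P (s e) ++ [e] ++ Q (t e)).count f : ℤ)
          - z e * ((P (s e) ++ Q (s e)).count f : ℤ)
        = z e * (if e = f then 1 else 0)
          + z e * (((Q (t e)).count f : ℤ) - ((Q (s e)).count f : ℤ)) := by
      intro e
      simp only [List.count_append, List.count_singleton, beq_iff_eq]
      push_cast
      by_cases h : e = f <;> simp [h] <;> ring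
    rw [Finset.sum_congr rfl fun e _ => step e, Finset.sum_add_distrib]
    have first : ∑ e : E, z e * (if e = f then 1 else 0) = z f := by
      rw [Finset.sum_congr rfl fun e _ => by
        rw [mul_ite, mul_one, mul_zero]]
      rw [Finset.sum_ite_eq' Finset.univ f z]
      simp
    have key : ∀ e : E, (((Q (t e)).count f : ℤ) - ((Q (s e)).count f : ℤ))
        = ∑ v : V, ((if t e = v then (1:ℤ) else 0) - (if s e = v then 1 else 0))
            * ((Q v).count f : ℤ) := by
      intro e
      simp only [sub_mul, one_mul, zero_mul, ite_mul]
      rw [Finset.sum_sub_distrib, Finset.sum_ite_eq, Finset.sum_ite_eq]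
      simp
    have second : ∑ e : E, z e * (((Q (t e)).count f : ℤ) - ((Q (s e)).count f : ℤ)) = 0 := by
      rw [Finset.sum_congr rfl fun e _ => by rw [key e, Finset.mul_sum]]
      rw [Finset.sum_comm]
      refine Finset.sum_eq_zero fun v _ => ?_
      have : ∑ e : E, z e * (((if t e = v then (1:ℤ) else 0) - (if s e = v then 1 else 0))
          * ((Q v).count f : ℤ))
          = (∑ e : E, z e * ((if t e = v then (1:ℤ) else 0) - (if s e = v then 1 else 0)))
            * ((Q v).count f : ℤ) := by
        rw [Finset.sum_mul]
        exact Finset.sum_congr rfl fun e _ => by ring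
      rw [this, hz v, zero_mul]
    rw [first, second, add_zero]
  rw [hzeq]
  refine sub_mem ?_ ?_
  · exact sum_mem fun e _ =>
      zsmul_mem (AddSubgroup.subset_closure (mem1 e)) _
  · exact sum_mem fun e _ =>
      zsmul_mem (AddSubgroup.subset_closure (mem2 (s e))) _
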